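/- In the example, for all s ≥ 0, τ > 0 and t ≥ 0 one has g(b_s(t)) ≤ g((b_s ⋄_τ a_{b_s(τ)})(t)) ≤ 1, and consequently for all T, λ > 0 the value functions at the origin satisfy V[v_T](0,0,0) = inf_{s>0} v_T(b_s) and V[w_λ](0,0,0) = inf_{s>0} w_λ(b_s). -/

import Mathlib

open MeasureTheory Set Filter Topology

noncomputable section

/-- Concatenation `z ⋄_h z'` of two processes at time `h`:
`(z ⋄_h z')(t) = z(t)` for `t < h` and `(z ⋄_h z')(t) = z'(t - h)` for `t ≥ h`. -/
def concat {Ω : Type*} (z z' : ℝ → Ω) (h : ℝ) : ℝ → Ω :=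
  fun t => if t < h then z t else z' (t - h)

/-- The time average `v_T(z) = (1/T) ∫₀^T g(z(t)) dt`. -/
def timeAvg {Ω : Type*} (g : Ω → ℝ) (T : ℝ) (z : ℝ → Ω) : ℝ :=
  (1 / T) * ∫ t in Ioc (0 : ℝ) T, g (z t)

/-- The discounted average `w_λ(z) = λ ∫₀^∞ e^{-λ t} g(z(t)) dt`. -/
def discAvg {Ω : Type*} (g : Ω → ℝ) (lam : ℝ) (z : ℝ → Ω) : ℝ :=
  lam * ∫ t in Ioi (0 : ℝ), Real.exp (-lam * t) * g (z t)

/-- The value function `V[J](ω) = inf { J(z) : z ∈ K, z(0) = ω }`. -/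
def Val {Ω : Type*} (K : Set (ℝ → Ω)) (J : (ℝ → Ω) → ℝ) (ω : Ω) : ℝ :=
  sInf (J '' {z ∈ K | z 0 = ω})

/-- The state space `Ω = ℝ_{≥0} × ℝ_{≥0} × ℝ_{≥0}` of the example,
realized as a subset of `ℝ × ℝ × ℝ`. -/
def Omega3 : Set (ℝ × ℝ × ℝ) := {p | 0 ≤ p.1 ∧ 0 ≤ p.2.1 ∧ 0 ≤ p.2.2}

/-- The running cost of the example: `g(x,y,r) = 0` if `x ∈ [1,2]` and `r = 0`,
and `g(x,y,r) = 1` otherwise. -/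
def gex : ℝ × ℝ × ℝ → ℝ := fun p => if p.1 ∈ Icc (1 : ℝ) 2 ∧ p.2.2 = 0 then 0 else 1

/-- The process `a_ω(t) = (x, y, t + r)` for `ω = (x, y, r)`. -/
def aproc (ω : ℝ × ℝ × ℝ) : ℝ → ℝ × ℝ × ℝ := fun t => (ω.1, ω.2.1, t + ω.2.2)

/-- The process `b_s(t) = (s t, t, 0)`. -/
def bproc (s : ℝ) : ℝ → ℝ × ℝ × ℝ := fun t => (s * t, t, 0)

/-- The set `K` of feasible processes of the example:
`K = {a_ω : ω ∈ Ω} ∪ {b_s : s ≥ 0} ∪ {b_s ⋄_τ a_{b_s(τ)} : s ≥ 0, τ > 0}`. -/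
def Kex : Set (ℝ → ℝ × ℝ × ℝ) :=
  {z | ∃ ω ∈ Omega3, z = aproc ω} ∪ {z | ∃ s : ℝ, 0 ≤ s ∧ z = bproc s} ∪
    {z | ∃ s : ℝ, 0 ≤ s ∧ ∃ τ : ℝ, 0 < τ ∧ z = concat (bproc s) (aproc (bproc s τ)) τ}

/-- In the example, `g(b_s(t)) ≤ g((b_s ⋄_τ a_{b_s(τ)})(t)) ≤ 1` for all
`s ≥ 0`, `τ > 0`, `t ≥ 0`; consequently, for all `T, λ > 0`,
`V[v_T](0,0,0) = inf_{s>0} v_T(b_s)` and `V[w_λ](0,0,0) = inf_{s>0} w_λ(b_s)`. -/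
lemma gex_nonneg (p : ℝ × ℝ × ℝ) : 0 ≤ gex p := by
  unfold gex; split <;> norm_num

lemma gex_le_one (p : ℝ × ℝ × ℝ) : gex p ≤ 1 := by
  unfold gex; split <;> norm_num

lemma gex_meas : Measurable gex := by
  unfold gex
  refine Measurable.ite ?_ measurable_const measurable_const
  have h : {p : ℝ × ℝ × ℝ | p.1 ∈ Icc (1:ℝ) 2 ∧ p.2.2 = 0} =
      (fun p : ℝ × ℝ × ℝ => p.1) ⁻¹' Icc 1 2 ∩ (fun p : ℝ × ℝ × ℝ => p.2.2) ⁻¹' {0} := by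
    ext p; simp [Set.mem_setOf_eq]
  rw [h]
  exact (measurable_fst measurableSet_Icc).inter
    ((measurable_snd.comp measurable_snd) (measurableSet_singleton 0))

lemma aproc_meas (ω : ℝ × ℝ × ℝ) : Measurable (aproc ω) :=
  measurable_const.prodMk (measurable_const.prodMk (measurable_id.add_const _))

lemma bproc_meas (s : ℝ) : Measurable (bproc s) :=
  (measurable_id.const_mul s).prodMk (measurable_id.prodMk measurable_const)

lemma concat_meas (s τ : ℝ) : Measurable (concat (bproc s) (aproc (bproc s τ)) τ) := by
  unfold concat
  exact Measurable.ite measurableSet_Iio (bproc_meas s)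
    ((aproc_meas _).comp (measurable_id.sub measurable_const))

lemma part1 (s τ t : ℝ) (hτ : 0 < τ) :
    gex (bproc s t) ≤ gex (concat (bproc s) (aproc (bproc s τ)) τ t) := by
  rcases lt_or_ge t τ with h | h
  · simp [concat, h]
  · have hc : concat (bproc s) (aproc (bproc s τ)) τ t = (s * τ, τ, t - τ) := by
      simp [concat, not_lt.mpr h, aproc, bproc]
    rw [hc]
    by_cases h2 : (s * τ ∈ Icc (1:ℝ) 2 ∧ t - τ = 0)
    · have ht : t = τ := by have := h2.2; linarith
      subst ht
      simp [gex, bproc, sub_self, h2.1]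
    · have h3 : gex ((s * τ, τ, t - τ) : ℝ × ℝ × ℝ) = 1 := by
        simp only [gex]
        rw [if_neg h2]
      rw [h3]; exact gex_le_one _

lemma intOn_Ioc {z : ℝ → ℝ × ℝ × ℝ} (hz : Measurable z) (T : ℝ) :
    IntegrableOn (fun t => gex (z t)) (Ioc 0 T) := by
  refine Integrable.mono' (g := fun _ => (1:ℝ)) ?_
    (gex_meas.comp hz).aestronglyMeasurable (ae_of_all _ fun t => ?_)
  · exact integrableOn_const measure_Ioc_lt_top.ne
  · rw [Real.norm_eq_abs, abs_of_nonneg (gex_nonneg _)]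
    exact gex_le_one _

lemma intOn_Ioi {z : ℝ → ℝ × ℝ × ℝ} (hz : Measurable z) {lam : ℝ} (hl : 0 < lam) :
    IntegrableOn (fun t => Real.exp (-lam * t) * gex (z t)) (Ioi 0) := by
  refine (exp_neg_integrableOn_Ioi 0 hl).mono' ?_ (ae_of_all _ fun t => ?_)
  · exact ((Real.measurable_exp.comp (measurable_id.const_mul (-lam))).mul
      (gex_meas.comp hz)).aestronglyMeasurable
  · rw [Real.norm_eq_abs, abs_mul, abs_of_pos (Real.exp_pos _),
      abs_of_nonneg (gex_nonneg _)]
    exact mul_le_of_le_one_right (Real.exp_pos _).le (gex_le_one _)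

lemma timeAvg_mono {z1 z2 : ℝ → ℝ × ℝ × ℝ} (h1 : Measurable z1) (h2 : Measurable z2)
    (hle : ∀ t, 0 < t → gex (z1 t) ≤ gex (z2 t)) {T : ℝ} (hT : 0 < T) :
    timeAvg gex T z1 ≤ timeAvg gex T z2 := by
  unfold timeAvg
  refine mul_le_mul_of_nonneg_left ?_ (by positivity)
  exact setIntegral_mono_on (intOn_Ioc h1 T) (intOn_Ioc h2 T) measurableSet_Ioc
    fun t ht => hle t ht.1

lemma discAvg_mono {z1 z2 : ℝ → ℝ × ℝ × ℝ} (h1 : Measurable z1) (h2 : Measurable z2)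
    (hle : ∀ t, 0 < t → gex (z1 t) ≤ gex (z2 t)) {lam : ℝ} (hl : 0 < lam) :
    discAvg gex lam z1 ≤ discAvg gex lam z2 := by
  unfold discAvg
  refine mul_le_mul_of_nonneg_left ?_ hl.le
  exact setIntegral_mono_on (intOn_Ioi h1 hl) (intOn_Ioi h2 hl) measurableSet_Ioi
    fun t ht => mul_le_mul_of_nonneg_left (hle t ht) (Real.exp_pos _).le

lemma timeAvg_nonneg {z : ℝ → ℝ × ℝ × ℝ} {T : ℝ} (hT : 0 < T) :
    0 ≤ timeAvg gex T z := by
  unfold timeAvg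
  exact mul_nonneg (by positivity)
    (setIntegral_nonneg measurableSet_Ioc fun t _ => gex_nonneg _)

lemma discAvg_nonneg {z : ℝ → ℝ × ℝ × ℝ} {lam : ℝ} (hl : 0 < lam) :
    0 ≤ discAvg gex lam z := by
  unfold discAvg
  exact mul_nonneg hl.le
    (setIntegral_nonneg measurableSet_Ioi fun t _ =>
      mul_nonneg (Real.exp_pos _).le (gex_nonneg _))

lemma meas_feasible {z : ℝ → ℝ × ℝ × ℝ} (hz : z ∈ Kex) : Measurable z := by
  rcases hz with (⟨ω, _, rfl⟩ | ⟨s, _, rfl⟩) | ⟨s, _, τ, _, rfl⟩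
  · exact aproc_meas ω
  · exact bproc_meas s
  · exact concat_meas s τ

lemma exists_dom {z : ℝ → ℝ × ℝ × ℝ} (hz : z ∈ Kex) (h0 : z 0 = (0, 0, 0)) :
    ∃ s : ℝ, 0 < s ∧ ∀ t, 0 < t → gex (bproc s t) ≤ gex (z t) := by
  rcases hz with (⟨ω, _, rfl⟩ | ⟨s, hs, rfl⟩) | ⟨s, hs, τ, hτ, rfl⟩
  · refine ⟨1, one_pos, fun t ht => ?_⟩
    have hω : ω.1 = 0 := by
      have := congrArg Prod.fst h0
      simpa [aproc] using this
    have : gex (aproc ω t) = 1 := by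
      unfold gex aproc
      rw [if_neg]
      simp only [hω]
      intro hcon
      have := hcon.1.1
      norm_num at this
    rw [this]; exact gex_le_one _
  · rcases eq_or_lt_of_le hs with rfl | hs
    · refine ⟨1, one_pos, fun t ht => ?_⟩
      have : gex (bproc 0 t) = 1 := by
        unfold gex bproc
        rw [if_neg]
        intro hcon
        have := hcon.1.1
        norm_num at this
      rw [this]; exact gex_le_one _
    · exact ⟨s, hs, fun t _ => le_refl _⟩
  · rcases eq_or_lt_of_le hs with rfl | hs
    · refine ⟨1, one_pos, fun t ht => ?_⟩
      have h1 : gex (bproc 0 t) = 1 := by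
        unfold gex bproc
        rw [if_neg]
        intro hcon
        have := hcon.1.1
        norm_num at this
      have := part1 0 τ t hτ
      rw [h1] at this
      exact (gex_le_one _).trans this
    · exact ⟨s, hs, fun t _ => part1 s τ t hτ⟩

lemma bproc_in_Kex {s : ℝ} (hs : 0 ≤ s) : bproc s ∈ Kex :=
  Or.inl (Or.inr ⟨s, hs, rfl⟩)

lemma bproc_zero (s : ℝ) : bproc s 0 = ((0 : ℝ), (0 : ℝ), (0 : ℝ)) := by
  simp [bproc]

lemma val_eq (J : (ℝ → ℝ × ℝ × ℝ) → ℝ)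
    (hnn : ∀ z : ℝ → ℝ × ℝ × ℝ, Measurable z → 0 ≤ J z)
    (hmono : ∀ z1 z2 : ℝ → ℝ × ℝ × ℝ, Measurable z1 → Measurable z2 →
      (∀ t, 0 < t → gex (z1 t) ≤ gex (z2 t)) → J z1 ≤ J z2) :
    Val Kex J (0, 0, 0) = sInf ((fun s => J (bproc s)) '' Ioi (0 : ℝ)) := by
  set A := J '' {z ∈ Kex | z 0 = ((0:ℝ), (0:ℝ), (0:ℝ))} with hA
  set B := (fun s => J (bproc s)) '' Ioi (0 : ℝ) with hB
  have hBsub : ∀ s ∈ Ioi (0:ℝ), J (bproc s) ∈ A := fun s hs =>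
    ⟨bproc s, ⟨bproc_in_Kex (le_of_lt hs), bproc_zero s⟩, rfl⟩
  have hAbdd : BddBelow A := by
    refine ⟨0, fun a ha => ?_⟩
    obtain ⟨z, hz, rfl⟩ := ha
    exact hnn z (meas_feasible hz.1)
  have hBbdd : BddBelow B := by
    refine ⟨0, fun a ha => ?_⟩
    obtain ⟨s, _, rfl⟩ := ha
    exact hnn _ (bproc_meas s)
  have hBne : B.Nonempty := ⟨J (bproc 1), 1, Set.mem_Ioi.mpr one_pos, rfl⟩
  apply le_antisymm
  · refine le_csInf hBne ?_
    rintro b ⟨s, hs, rfl⟩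
    exact csInf_le hAbdd (hBsub s hs)
  · refine le_csInf ⟨J (bproc 1), hBsub 1 (Set.mem_Ioi.mpr one_pos)⟩ ?_
    rintro a ⟨z, ⟨hzK, hz0⟩, rfl⟩
    obtain ⟨s, hs, hdom⟩ := exists_dom hzK hz0
    calc sInf B ≤ J (bproc s) := csInf_le hBbdd ⟨s, Set.mem_Ioi.mpr hs, rfl⟩
      _ ≤ J z := hmono _ _ (bproc_meas s) (meas_feasible hzK) hdom

theorem val_origin_eq_inf :
    (∀ s τ t : ℝ, 0 ≤ s → 0 < τ → 0 ≤ t →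
      gex (bproc s t) ≤ gex (concat (bproc s) (aproc (bproc s τ)) τ t) ∧
      gex (concat (bproc s) (aproc (bproc s τ)) τ t) ≤ 1) ∧
    (∀ T : ℝ, 0 < T →
      Val Kex (timeAvg gex T) (0, 0, 0) =
        sInf ((fun s => timeAvg gex T (bproc s)) '' Ioi (0 : ℝ))) ∧
    (∀ lam : ℝ, 0 < lam →
      Val Kex (discAvg gex lam) (0, 0, 0) =
        sInf ((fun s => discAvg gex lam (bproc s)) '' Ioi (0 : ℝ))) := by
  refine ⟨fun s τ t hs hτ ht => ⟨part1 s τ t hτ, gex_le_one _⟩, fun T hT => ?_, fun lam hl => ?_⟩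
  · exact val_eq (timeAvg gex T) (fun z _ => timeAvg_nonneg hT)
      (fun z1 z2 h1 h2 hle => timeAvg_mono h1 h2 hle hT)
  · exact val_eq (discAvg gex lam) (fun z _ => discAvg_nonneg hl)
      (fun z1 z2 h1 h2 hle => discAvg_mono h1 h2 hle hl)
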